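/- Let e = (1/|K|)∑_{k∈K} g_k + (1/(|K|ν)) r − (1/N)∑_{k∈N} g_k, where r ~ N(0, σ²I_d) is independent Gaussian noise and each ‖g_k‖₂ ≤ ϖ. Then E[‖e‖₂²] ≤ 4ϖ²(1 − |K|/N)² + dσ²/(|K|²ν²). -/

import Mathlib

open MeasureTheory ProbabilityTheory Real Filter Asymptotics
open scoped ENNReal NNReal RealInnerProductSpace


lemma integrable_sq_mul_exp_neg_mul_sq {b : ℝ} (hb : 0 < b) :
    Integrable (fun x : ℝ => x ^ 2 * Real.exp (-b * x ^ 2)) := by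
  have h := integrable_rpow_mul_exp_neg_mul_sq hb (s := 2) (by norm_num)
  have he : (fun x : ℝ => x ^ (2:ℝ) * Real.exp (-b * x ^ 2))
      = fun x : ℝ => x ^ 2 * Real.exp (-b * x ^ 2) := by
    funext x
    rw [show (2 : ℝ) = ((2 : ℕ) : ℝ) by norm_num, Real.rpow_natCast]
  rwa [he] at h

lemma tendsto_mul_exp_neg_mul_sq {b : ℝ} (hb : 0 < b) :
    Tendsto (fun x : ℝ => x * Real.exp (-b * x ^ 2)) atTop (nhds 0) := by
  have ho := rpow_mul_exp_neg_mul_sq_isLittleO_exp_neg hb 1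
  have hm : Tendsto (fun x : ℝ => -(1/2) * x) atTop atBot := by
    have h1 : Tendsto (fun x : ℝ => (1/2 : ℝ) * x) atTop atTop :=
      (tendsto_id.const_mul_atTop (by norm_num))
    have h2 := tendsto_neg_atTop_atBot.comp h1
    refine h2.congr (fun x => ?_)
    simp [Function.comp]
  have h0 : Tendsto (fun x : ℝ => Real.exp (-(1/2) * x)) atTop (nhds 0) :=
    Real.tendsto_exp_atBot.comp hm
  have h1 := ho.isBigO.trans_tendsto h0
  refine h1.congr' ?_
  filter_upwards [eventually_gt_atTop (0:ℝ)] with x hx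
  rw [Real.rpow_one]

lemma integral_sq_mul_exp_neg_mul_sq {b : ℝ} (hb : 0 < b) :
    ∫ x : ℝ, x ^ 2 * Real.exp (-b * x ^ 2) = Real.sqrt (π / b) / (2 * b) := by
  have hb' : (2 : ℝ) * b ≠ 0 := by positivity
  set F : ℝ → ℝ := fun x => -(x / (2 * b)) * Real.exp (-b * x ^ 2) with hF
  have hderiv : ∀ x : ℝ, HasDerivAt F
      (x ^ 2 * Real.exp (-b * x ^ 2) - (2 * b)⁻¹ * Real.exp (-b * x ^ 2)) x := by
    intro x
    have h1 : HasDerivAt (fun x : ℝ => -b * x ^ 2) (-b * (2 * x)) x := by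
      simpa using ((hasDerivAt_pow 2 x).const_mul (-b))
    have h2 : HasDerivAt (fun x : ℝ => Real.exp (-b * x ^ 2)) ((-b * (2*x)) * Real.exp (-b * x ^ 2)) x :=
      (Real.hasDerivAt_exp _).comp x h1 |>.congr_deriv (by ring)
    have h3 : HasDerivAt (fun x : ℝ => -(x / (2 * b))) (-(2*b)⁻¹) x := by
      exact ((hasDerivAt_id x).div_const (2*b)).neg.congr_deriv (by rw [one_div])
    have := h3.mul h2
    exact this.congr_deriv (by field_simp; ring)
  have hint : Integrable (fun x : ℝ => x ^ 2 * Real.exp (-b * x ^ 2) - (2 * b)⁻¹ * Real.exp (-b * x ^ 2)) :=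
    (integrable_sq_mul_exp_neg_mul_sq hb).sub ((integrable_exp_neg_mul_sq hb).const_mul _)
  have hxe := tendsto_mul_exp_neg_mul_sq hb
  have hlimtop : Tendsto F atTop (nhds 0) := by
    have h := (hxe.div_const (2 * b)).neg
    rw [zero_div, neg_zero] at h
    refine h.congr (fun x => ?_)
    simp only [F]
    ring
  have hlimbot : Tendsto F atBot (nhds 0) := by
    have h : Tendsto (fun x : ℝ => F (-x)) atTop (nhds 0) := by
      have h2 := hxe.div_const (2 * b)
      rw [zero_div] at h2
      refine h2.congr (fun x => ?_)
      simp only [F]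
      ring_nf
    have h3 := h.comp tendsto_neg_atBot_atTop
    refine h3.congr (fun x => ?_)
    simp [Function.comp]
  have hIic := integral_Iic_of_hasDerivAt_of_tendsto' (a := 0) (f := F)
      (f' := fun x => x ^ 2 * Real.exp (-b * x ^ 2) - (2 * b)⁻¹ * Real.exp (-b * x ^ 2))
      (fun x _ => hderiv x) hint.integrableOn hlimbot
  have hIoi := integral_Ioi_of_hasDerivAt_of_tendsto' (a := 0) (f := F)
      (f' := fun x => x ^ 2 * Real.exp (-b * x ^ 2) - (2 * b)⁻¹ * Real.exp (-b * x ^ 2))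
      (fun x _ => hderiv x) hint.integrableOn hlimtop
  have hsplit := intervalIntegral.integral_Iic_add_Ioi (b := (0:ℝ))
      (f := fun x => x ^ 2 * Real.exp (-b * x ^ 2) - (2 * b)⁻¹ * Real.exp (-b * x ^ 2))
      hint.integrableOn hint.integrableOn
  have hzero : ∫ x : ℝ, (x ^ 2 * Real.exp (-b * x ^ 2) - (2 * b)⁻¹ * Real.exp (-b * x ^ 2)) = 0 := by
    rw [← hsplit, hIic, hIoi]
    simp [F]
  rw [integral_sub (integrable_sq_mul_exp_neg_mul_sq hb)
      ((integrable_exp_neg_mul_sq hb).const_mul ((2*b)⁻¹)), sub_eq_zero] at hzero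
  rw [hzero, integral_const_mul, integral_gaussian]
  field_simp


section gauss
variable {σ : ℝ} (hσ : 0 < σ)

lemma gaussian_eq_withDensity (hσ : 0 < σ) :
    gaussianReal 0 ⟨σ^2, sq_nonneg σ⟩ =
      MeasureTheory.volume.withDensity
        (fun x => ((gaussianPDFReal 0 (⟨σ^2, sq_nonneg σ⟩ : ℝ≥0) x).toNNReal : ℝ≥0∞)) := by
  have hv : (⟨σ^2, sq_nonneg σ⟩ : NNReal) ≠ 0 :=
    fun h => (by positivity : (0:ℝ) < σ^2).ne' (congrArg NNReal.toReal h)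
  rw [gaussianReal_of_var_ne_zero 0 hv]
  rfl

lemma integral_gaussianReal_eq (hσ : 0 < σ) (f : ℝ → ℝ) :
    ∫ x, f x ∂(gaussianReal 0 ⟨σ^2, sq_nonneg σ⟩)
      = ∫ x, gaussianPDFReal 0 ⟨σ^2, sq_nonneg σ⟩ x * f x := by
  rw [gaussian_eq_withDensity hσ]
  refine (integral_withDensity_eq_integral_smul
      ((stronglyMeasurable_gaussianPDFReal 0 _).measurable.real_toNNReal) f).trans ?_
  refine integral_congr_ae (Eventually.of_forall fun x => ?_)
  simp only [NNReal.smul_def, smul_eq_mul, Real.coe_toNNReal _ (gaussianPDFReal_nonneg 0 _ x)]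
  exact congrArg (· * f x) (Real.coe_toNNReal _ (gaussianPDFReal_nonneg 0 _ x))

lemma integrable_gaussianReal_iff (hσ : 0 < σ) (f : ℝ → ℝ) :
    Integrable f (gaussianReal 0 ⟨σ^2, sq_nonneg σ⟩)
      ↔ Integrable (fun x => gaussianPDFReal 0 ⟨σ^2, sq_nonneg σ⟩ x * f x) := by
  rw [gaussian_eq_withDensity hσ]
  refine (integrable_withDensity_iff_integrable_smul
      ((stronglyMeasurable_gaussianPDFReal 0 _).measurable.real_toNNReal)).trans ?_
  refine integrable_congr (Eventually.of_forall fun x => ?_)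
  simp only [NNReal.smul_def, smul_eq_mul, Real.coe_toNNReal _ (gaussianPDFReal_nonneg 0 _ x)]
  exact congrArg (· * f x) (Real.coe_toNNReal _ (gaussianPDFReal_nonneg 0 _ x))

lemma pdf_eq (hσ : 0 < σ) (x : ℝ) :
    gaussianPDFReal 0 ⟨σ^2, sq_nonneg σ⟩ x
      = (Real.sqrt (2 * π * σ^2))⁻¹ * Real.exp (-(2*σ^2)⁻¹ * x ^ 2) := by
  have hs : σ^2 ≠ 0 := by positivity
  show (Real.sqrt (2 * π * σ^2))⁻¹ * Real.exp (-(x - 0)^2 / (2 * σ^2)) = _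
  congr 1
  field_simp
  simp

lemma integrable_id_gaussianReal (hσ : 0 < σ) :
    Integrable (fun x : ℝ => x) (gaussianReal 0 ⟨σ^2, sq_nonneg σ⟩) := by
  rw [integrable_gaussianReal_iff hσ]
  have hb : (0:ℝ) < (2*σ^2)⁻¹ := by positivity
  have h := ((integrable_mul_exp_neg_mul_sq hb).const_mul (Real.sqrt (2 * π * σ^2))⁻¹)
  refine h.congr (Eventually.of_forall fun x => ?_)
  simp only [pdf_eq hσ]
  ring

lemma integrable_sq_gaussianReal (hσ : 0 < σ) :
    Integrable (fun x : ℝ => x ^ 2) (gaussianReal 0 ⟨σ^2, sq_nonneg σ⟩) := by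
  rw [integrable_gaussianReal_iff hσ]
  have hb : (0:ℝ) < (2*σ^2)⁻¹ := by positivity
  have h := ((integrable_sq_mul_exp_neg_mul_sq hb).const_mul (Real.sqrt (2 * π * σ^2))⁻¹)
  refine h.congr (Eventually.of_forall fun x => ?_)
  simp only [pdf_eq hσ]
  ring

lemma integral_id_gaussianReal' (hσ : 0 < σ) :
    ∫ x, x ∂(gaussianReal 0 ⟨σ^2, sq_nonneg σ⟩) = 0 := by
  rw [integral_gaussianReal_eq hσ]
  set h : ℝ → ℝ := fun x => gaussianPDFReal 0 ⟨σ^2, sq_nonneg σ⟩ x * x with hh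
  have hodd : ∀ x, h (-x) = - h x := by
    intro x
    simp only [h, pdf_eq hσ]
    ring_nf
  have h1 : ∫ x, h x = ∫ x, h (-x) := (integral_neg_eq_self h volume).symm
  have h2 : ∫ x, h (-x) = - ∫ x, h x := by
    simp_rw [hodd]
    exact integral_neg h
  linarith [h1, h2]

lemma integral_sq_gaussianReal' (hσ : 0 < σ) :
    ∫ x, x ^ 2 ∂(gaussianReal 0 ⟨σ^2, sq_nonneg σ⟩) = σ ^ 2 := by
  rw [integral_gaussianReal_eq hσ]
  have hb : (0:ℝ) < (2*σ^2)⁻¹ := by positivity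
  have heq : ∀ x : ℝ, gaussianPDFReal 0 ⟨σ^2, sq_nonneg σ⟩ x * x ^ 2
      = (Real.sqrt (2 * π * σ^2))⁻¹ * (x ^ 2 * Real.exp (-(2*σ^2)⁻¹ * x ^ 2)) := by
    intro x; rw [pdf_eq hσ]; ring
  simp_rw [heq]
  rw [integral_const_mul, integral_sq_mul_exp_neg_mul_sq hb]
  have h1 : π / (2*σ^2)⁻¹ = 2 * π * σ^2 := by
    field_simp
  rw [h1]
  have h2 : Real.sqrt (2 * π * σ^2) ≠ 0 := by
    refine ne_of_gt (Real.sqrt_pos.mpr ?_)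
    positivity
  field_simp
end gauss

theorem aggregation_error_bound {Ω : Type*} [MeasureSpace Ω]
    (P : Measure Ω) [IsProbabilityMeasure P]
    {ι : Type*} (Nset Kset : Finset ι) (hKN : Kset ⊆ Nset)
    (hK : Kset.Nonempty) (hN : Nset.Nonempty)
    (d : ℕ) (ϖ ν σ : ℝ) (hϖ : 0 ≤ ϖ) (hν : 0 < ν) (hσ : 0 < σ)
    (g : ι → EuclideanSpace ℝ (Fin d)) (hg : ∀ k ∈ Nset, ‖g k‖ ≤ ϖ)
    (r : Ω → EuclideanSpace ℝ (Fin d)) (hr : Measurable r)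
    (hlaw : ∀ i : Fin d,
      Measure.map (fun ω => r ω i) P = gaussianReal 0 ⟨σ ^ 2, sq_nonneg σ⟩)
    (hindep : iIndepFun (fun i ω => r ω i) P)
    (e : Ω → EuclideanSpace ℝ (Fin d))
    (he : ∀ ω, e ω =
      ((Kset.card : ℝ)⁻¹) • ∑ k ∈ Kset, g k
        + ((Kset.card : ℝ) * ν)⁻¹ • r ω
        - ((Nset.card : ℝ)⁻¹) • ∑ k ∈ Nset, g k) :
    ∫ ω, ‖e ω‖ ^ 2 ∂P ≤
      4 * ϖ ^ 2 * (1 - (Kset.card : ℝ) / Nset.card) ^ 2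
        + d * σ ^ 2 / ((Kset.card : ℝ) ^ 2 * ν ^ 2) := by
  classical
  have hK0 : (0:ℝ) < Kset.card := by exact_mod_cast hK.card_pos
  have hN0 : (0:ℝ) < Nset.card := by exact_mod_cast hN.card_pos
  have hKleN : (Kset.card:ℝ) ≤ Nset.card := by exact_mod_cast Finset.card_le_card hKN
  set a : EuclideanSpace ℝ (Fin d) :=
    ((Kset.card : ℝ)⁻¹) • ∑ k ∈ Kset, g k - ((Nset.card : ℝ)⁻¹) • ∑ k ∈ Nset, g k with ha_def
  set c : ℝ := ((Kset.card : ℝ) * ν)⁻¹ with hc_def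
  have he' : ∀ ω, e ω = a + c • r ω := by
    intro ω; rw [he ω, ha_def]; abel
  -- coordinate measurability
  have hXm : ∀ i : Fin d, Measurable fun ω => r ω i := fun i => (measurable_pi_apply i).comp ((WithLp.measurable_ofLp 2 _).comp hr)
  -- moments
  have hint1 : ∀ i : Fin d, Integrable (fun ω => r ω i) P := by
    intro i
    have h := integrable_id_gaussianReal hσ
    rw [← hlaw i] at h
    exact (integrable_map_measure aestronglyMeasurable_id (hXm i).aemeasurable).mp h
  have hint2 : ∀ i : Fin d, Integrable (fun ω => (r ω i) ^ 2) P := by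
    intro i
    have h := integrable_sq_gaussianReal hσ
    rw [← hlaw i] at h
    exact (integrable_map_measure (measurable_id.pow_const 2).aestronglyMeasurable
      (hXm i).aemeasurable).mp h
  have hE1 : ∀ i : Fin d, ∫ ω, r ω i ∂P = 0 := by
    intro i
    have h := integral_map (μ := P) (hXm i).aemeasurable
      (f := fun x : ℝ => x) aestronglyMeasurable_id
    rw [hlaw i, integral_id_gaussianReal' hσ] at h
    exact h.symm
  have hE2 : ∀ i : Fin d, ∫ ω, (r ω i) ^ 2 ∂P = σ ^ 2 := by
    intro i
    have h := integral_map (μ := P) (hXm i).aemeasurable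
      (f := fun x : ℝ => x ^ 2) (measurable_id.pow_const 2).aestronglyMeasurable
    rw [hlaw i, integral_sq_gaussianReal' hσ] at h
    exact h.symm
  -- norm expansion
  have hnorm : ∀ ω, ‖e ω‖ ^ 2 =
      ‖a‖ ^ 2 + 2 * c * (∑ i, a i * r ω i) + c ^ 2 * (∑ i, (r ω i) ^ 2) := by
    intro ω
    rw [he' ω, norm_add_sq_real]
    have h1 : (inner ℝ a (c • r ω) : ℝ) = c * ∑ i, a i * r ω i := by
      rw [real_inner_smul_right]
      simp [PiLp.inner_apply, RCLike.inner_apply, conj_trivial, mul_comm]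
    have h2 : ‖c • r ω‖ ^ 2 = c ^ 2 * ∑ i, (r ω i) ^ 2 := by
      rw [norm_smul, mul_pow]
      congr 1
      · rw [Real.norm_eq_abs, sq_abs]
      · rw [EuclideanSpace.norm_eq, Real.sq_sqrt (by positivity)]
        congr 1; funext i; rw [Real.norm_eq_abs, sq_abs]
    rw [h1, h2]; ring
  have hS1 : Integrable (fun ω => ∑ i, a i * r ω i) P :=
    integrable_finset_sum _ (fun i _ => (hint1 i).const_mul (a i))
  have hS2 : Integrable (fun ω => ∑ i, (r ω i) ^ 2) P :=
    integrable_finset_sum _ (fun i _ => hint2 i)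
  have hA : Integrable (fun ω : Ω => ‖a‖ ^ 2 + 2 * c * ∑ i, a i * r ω i) P := by
    exact (integrable_const _).add (hS1.const_mul _)
  have hB : Integrable (fun ω : Ω => c ^ 2 * ∑ i, (r ω i) ^ 2) P := hS2.const_mul _
  have hval : ∫ ω, ‖e ω‖ ^ 2 ∂P = ‖a‖ ^ 2 + c ^ 2 * (d * σ ^ 2) := by
    calc ∫ ω, ‖e ω‖ ^ 2 ∂P
        = ∫ ω, (‖a‖ ^ 2 + 2 * c * ∑ i, a i * r ω i + c ^ 2 * ∑ i, (r ω i) ^ 2) ∂P :=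
          integral_congr_ae (Eventually.of_forall hnorm)
      _ = (∫ ω, (‖a‖ ^ 2 + 2 * c * ∑ i, a i * r ω i) ∂P)
            + ∫ ω, c ^ 2 * ∑ i, (r ω i) ^ 2 ∂P := by
          exact integral_add hA hB
      _ = ((∫ _ω, ‖a‖ ^ 2 ∂P) + ∫ ω, 2 * c * ∑ i, a i * r ω i ∂P)
            + ∫ ω, c ^ 2 * ∑ i, (r ω i) ^ 2 ∂P := by
          rw [integral_add (integrable_const _) (hS1.const_mul _)]
      _ = ‖a‖ ^ 2 + c ^ 2 * (d * σ ^ 2) := by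
          rw [integral_const, integral_const_mul, integral_const_mul,
            integral_finset_sum _ (fun i _ => (hint1 i).const_mul (a i)),
            integral_finset_sum _ (fun i _ => hint2 i)]
          simp only [integral_const_mul, hE1, hE2, mul_zero, Finset.sum_const_zero,
            Finset.sum_const, Finset.card_univ, Fintype.card_fin, nsmul_eq_mul,
            measure_univ, probReal_univ, ENNReal.toReal_one, smul_eq_mul, one_mul]
          ring
  rw [hval]
  have hcsq : c ^ 2 * (d * σ ^ 2) = d * σ ^ 2 / ((Kset.card : ℝ) ^ 2 * ν ^ 2) := by
    rw [hc_def, inv_pow, mul_pow, div_eq_mul_inv]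
    ring
  -- bound on ‖a‖
  have hsum : ∑ k ∈ Nset, g k = ∑ k ∈ Nset \ Kset, g k + ∑ k ∈ Kset, g k :=
    (Finset.sum_sdiff hKN).symm
  have ha2 : a = ((Kset.card : ℝ)⁻¹ - (Nset.card : ℝ)⁻¹) • ∑ k ∈ Kset, g k
      - ((Nset.card : ℝ)⁻¹) • ∑ k ∈ Nset \ Kset, g k := by
    rw [ha_def, hsum]; module
  have hSK : ‖∑ k ∈ Kset, g k‖ ≤ (Kset.card : ℝ) * ϖ := by
    calc ‖∑ k ∈ Kset, g k‖ ≤ ∑ k ∈ Kset, ‖g k‖ := norm_sum_le _ _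
    _ ≤ Kset.card • ϖ := Finset.sum_le_card_nsmul _ _ ϖ (fun k hk => hg k (hKN hk))
    _ = (Kset.card : ℝ) * ϖ := nsmul_eq_mul _ _
  have hSD : ‖∑ k ∈ Nset \ Kset, g k‖ ≤ ((Nset.card : ℝ) - Kset.card) * ϖ := by
    calc ‖∑ k ∈ Nset \ Kset, g k‖ ≤ ∑ k ∈ Nset \ Kset, ‖g k‖ := norm_sum_le _ _
    _ ≤ (Nset \ Kset).card • ϖ := Finset.sum_le_card_nsmul _ _ ϖ
        (fun k hk => hg k (Finset.mem_sdiff.mp hk).1)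
    _ = ((Nset \ Kset).card : ℝ) * ϖ := nsmul_eq_mul _ _
    _ = ((Nset.card : ℝ) - Kset.card) * ϖ := by
        rw [Finset.card_sdiff_of_subset hKN, Nat.cast_sub (Finset.card_le_card hKN)]
  have hinv : (Nset.card : ℝ)⁻¹ ≤ (Kset.card : ℝ)⁻¹ :=
    one_div_le_one_div_of_le hK0 hKleN |>.trans_eq (one_div _) |>.trans_eq' (one_div _)
  have hna : ‖a‖ ≤ 2 * ϖ * (1 - (Kset.card : ℝ) / Nset.card) := by
    rw [ha2]
    calc ‖_ - _‖ ≤ ‖((Kset.card : ℝ)⁻¹ - (Nset.card : ℝ)⁻¹) • ∑ k ∈ Kset, g k‖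
        + ‖((Nset.card : ℝ)⁻¹) • ∑ k ∈ Nset \ Kset, g k‖ := norm_sub_le _ _
    _ ≤ ((Kset.card : ℝ)⁻¹ - (Nset.card : ℝ)⁻¹) * ((Kset.card : ℝ) * ϖ)
        + (Nset.card : ℝ)⁻¹ * (((Nset.card : ℝ) - Kset.card) * ϖ) := by
        gcongr
        · rw [norm_smul, Real.norm_eq_abs, abs_of_nonneg (by linarith)]
          exact mul_le_mul_of_nonneg_left hSK (by linarith)
        · rw [norm_smul, Real.norm_eq_abs, abs_of_nonneg (by positivity)]
          exact mul_le_mul_of_nonneg_left hSD (by positivity)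
    _ = 2 * ϖ * (1 - (Kset.card : ℝ) / Nset.card) := by
        field_simp
        ring
  have hna2 : ‖a‖ ^ 2 ≤ 4 * ϖ ^ 2 * (1 - (Kset.card : ℝ) / Nset.card) ^ 2 := by
    have := pow_le_pow_left₀ (norm_nonneg a) hna 2
    calc ‖a‖ ^ 2 ≤ (2 * ϖ * (1 - (Kset.card : ℝ) / Nset.card)) ^ 2 := this
    _ = 4 * ϖ ^ 2 * (1 - (Kset.card : ℝ) / Nset.card) ^ 2 := by ring
  linarith [hcsq.le, hcsq.ge]
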